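/- Let R be a ring with a discrete valuation v. Assume R has characteristic zero and there is a prime number p with v(p·1_R) > 0. Let x, y ∈ R be commuting elements with v(x) = v(y) = 0 and (p − 1)·v(x − y) > v(p·1_R) (i.e. v(x − y) > v(p)/(p − 1)). Then for every integer n ≥ 1 one has v(x^n − y^n) = v(x − y) + v(n·1_R). -/

import Mathlib

open Finset

section helpers
variable {R : Type*} [Ring R]

lemma vval_one (v : R → WithTop ℤ) (hv0 : ∀ x : R, v x = ⊤ ↔ x = 0)
    (hvmul : ∀ x y : R, v (x * y) = v x + v y) (h1 : (1:R) ≠ 0) : v 1 = 0 := by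
  have h := hvmul 1 1
  rw [one_mul] at h
  have ht : v 1 ≠ ⊤ := fun hh => h1 ((hv0 1).mp hh)
  obtain ⟨a, ha⟩ := WithTop.ne_top_iff_exists.mp ht
  rw [← ha] at h ⊢
  rw [← WithTop.coe_add, WithTop.coe_inj] at h
  norm_cast
  omega

lemma vval_neg (v : R → WithTop ℤ) (hv0 : ∀ x : R, v x = ⊤ ↔ x = 0)
    (hvmul : ∀ x y : R, v (x * y) = v x + v y) (h1 : (1:R) ≠ 0) (a : R) :
    v (-a) = v a := by
  have hm1 : v (-1 : R) = 0 := by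
    have h := hvmul (-1) (-1)
    rw [neg_mul_neg, one_mul, vval_one v hv0 hvmul h1] at h
    have ht : v (-1 : R) ≠ ⊤ := fun hh => h1 (neg_eq_zero.mp ((hv0 _).mp hh)).symm.symm
    obtain ⟨b, hb⟩ := WithTop.ne_top_iff_exists.mp ht
    rw [← hb] at h ⊢
    rw [← WithTop.coe_add] at h
    norm_cast at h ⊢
    omega
  calc v (-a) = v ((-1) * a) := by rw [neg_one_mul]
  _ = v a := by rw [hvmul, hm1, zero_add]

/-- If v a < v b then v (a + b) = v a. -/
lemma vval_add_eq (v : R → WithTop ℤ) (hv0 : ∀ x : R, v x = ⊤ ↔ x = 0)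
    (hvmul : ∀ x y : R, v (x * y) = v x + v y)
    (hvadd : ∀ x y : R, min (v x) (v y) ≤ v (x + y)) (h1 : (1:R) ≠ 0)
    {a b : R} (h : v a < v b) : v (a + b) = v a := by
  refine le_antisymm ?_ ?_
  · by_contra hc
    push_neg at hc
    have h2 := hvadd (a + b) (-b)
    rw [add_neg_cancel_right, vval_neg v hv0 hvmul h1] at h2
    have : v a < min (v (a + b)) (v b) := lt_min hc h
    exact absurd (lt_of_lt_of_le this h2) (lt_irrefl _)
  · have := hvadd a b
    rwa [min_eq_left h.le] at this

lemma vval_sum_le (v : R → WithTop ℤ) (hv0 : ∀ x : R, v x = ⊤ ↔ x = 0)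
    (hvadd : ∀ x y : R, min (v x) (v y) ≤ v (x + y))
    {ι : Type*} (s : Finset ι) (f : ι → R) (c : WithTop ℤ)
    (h : ∀ i ∈ s, c ≤ v (f i)) : c ≤ v (∑ i ∈ s, f i) := by
  induction s using Finset.cons_induction with
  | empty => rw [Finset.sum_empty, (hv0 0).mpr rfl]; exact le_top
  | cons a s ha ih =>
    rw [Finset.sum_cons]
    refine le_trans (le_min (h a (Finset.mem_cons_self a s)) ?_) (hvadd _ _)
    exact ih fun i hi => h i (Finset.mem_cons_of_mem hi)

lemma vval_pow (v : R → WithTop ℤ) (hv0 : ∀ x : R, v x = ⊤ ↔ x = 0)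
    (hvmul : ∀ x y : R, v (x * y) = v x + v y) (h1 : (1:R) ≠ 0)
    (a : R) (i : ℕ) : v (a ^ i) = i • v a := by
  induction i with
  | zero => rw [pow_zero, vval_one v hv0 hvmul h1, zero_smul]
  | succ i ih => rw [pow_succ, hvmul, ih, succ_nsmul]

lemma vval_pow_zero (v : R → WithTop ℤ) (hv0 : ∀ x : R, v x = ⊤ ↔ x = 0)
    (hvmul : ∀ x y : R, v (x * y) = v x + v y) (h1 : (1:R) ≠ 0)
    {a : R} (ha : v a = 0) (i : ℕ) : v (a ^ i) = 0 := by
  rw [vval_pow v hv0 hvmul h1, ha, smul_zero]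

lemma vval_nat_nonneg (v : R → WithTop ℤ) (hv0 : ∀ x : R, v x = ⊤ ↔ x = 0)
    (hvmul : ∀ x y : R, v (x * y) = v x + v y)
    (hvadd : ∀ x y : R, min (v x) (v y) ≤ v (x + y)) (h1 : (1:R) ≠ 0)
    (n : ℕ) : 0 ≤ v ((n : R)) := by
  induction n with
  | zero => rw [Nat.cast_zero, (hv0 0).mpr rfl]; exact le_top
  | succ n ih =>
    rw [Nat.cast_succ]
    refine le_trans (le_min ih ?_) (hvadd _ _)
    rw [vval_one v hv0 hvmul h1]

lemma vval_int_nonneg (v : R → WithTop ℤ) (hv0 : ∀ x : R, v x = ⊤ ↔ x = 0)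
    (hvmul : ∀ x y : R, v (x * y) = v x + v y)
    (hvadd : ∀ x y : R, min (v x) (v y) ≤ v (x + y)) (h1 : (1:R) ≠ 0)
    (m : ℤ) : 0 ≤ v ((m : R)) := by
  rcases m with n | n
  · rw [Int.ofNat_eq_natCast, Int.cast_natCast]
    exact vval_nat_nonneg v hv0 hvmul hvadd h1 n
  · rw [Int.cast_negSucc, vval_neg v hv0 hvmul h1]
    exact_mod_cast vval_nat_nonneg v hv0 hvmul hvadd h1 (n+1)

lemma vval_nat_coprime (v : R → WithTop ℤ) (hv0 : ∀ x : R, v x = ⊤ ↔ x = 0)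
    (hvmul : ∀ x y : R, v (x * y) = v x + v y)
    (hvadd : ∀ x y : R, min (v x) (v y) ≤ v (x + y)) (h1 : (1:R) ≠ 0)
    {p : ℕ} (hp : p.Prime) (hvp : 0 < v ((p : R)))
    {n : ℕ} (hn : ¬ p ∣ n) : v ((n : R)) = 0 := by
  refine le_antisymm ?_ (vval_nat_nonneg v hv0 hvmul hvadd h1 n)
  by_contra hc
  push_neg at hc
  have hcop : IsCoprime (p : ℤ) (n : ℤ) := by
    rw [Int.isCoprime_iff_gcd_eq_one, Int.gcd_natCast_natCast]
    exact (Nat.Prime.coprime_iff_not_dvd hp).mpr hn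
  obtain ⟨a, b, hab⟩ := hcop
  have key : (0 : WithTop ℤ) < v ((a : R) * (p : R) + (b : R) * (n : R)) := by
    refine lt_of_lt_of_le (lt_min ?_ ?_) (hvadd _ _)
    · rw [hvmul]
      calc (0 : WithTop ℤ) < v ((p:R)) := hvp
      _ = 0 + v ((p:R)) := (zero_add _).symm
      _ ≤ v ((a:R)) + v ((p:R)) := by
          exact add_le_add_left (vval_int_nonneg v hv0 hvmul hvadd h1 a) _
    · rw [hvmul]
      calc (0 : WithTop ℤ) < v ((n:R)) := hc
      _ = 0 + v ((n:R)) := (zero_add _).symm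
      _ ≤ v ((b:R)) + v ((n:R)) := by
          exact add_le_add_left (vval_int_nonneg v hv0 hvmul hvadd h1 b) _
  have : ((a : R) * (p : R) + (b : R) * (n : R)) = 1 := by
    have := congrArg (fun z : ℤ => ((z : R))) hab
    push_cast at this
    simpa using this
  rw [this, vval_one v hv0 hvmul h1] at key
  exact lt_irrefl _ key

end helpers
section core
variable {R : Type*} [Ring R]

lemma vval_geom_nonneg (v : R → WithTop ℤ) (hv0 : ∀ x : R, v x = ⊤ ↔ x = 0)
    (hvmul : ∀ x y : R, v (x * y) = v x + v y)
    (hvadd : ∀ x y : R, min (v x) (v y) ≤ v (x + y)) (h1 : (1:R) ≠ 0)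
    {x y : R} (hvx : v x = 0) (hvy : v y = 0) (n : ℕ) :
    0 ≤ v (∑ i ∈ range n, x ^ i * y ^ (n - 1 - i)) := by
  refine vval_sum_le v hv0 hvadd _ _ _ fun i _ => ?_
  rw [hvmul, vval_pow_zero v hv0 hvmul h1 hvx, vval_pow_zero v hv0 hvmul h1 hvy, add_zero]

lemma vval_pow_sub_ge (v : R → WithTop ℤ) (hv0 : ∀ x : R, v x = ⊤ ↔ x = 0)
    (hvmul : ∀ x y : R, v (x * y) = v x + v y)
    (hvadd : ∀ x y : R, min (v x) (v y) ≤ v (x + y)) (h1 : (1:R) ≠ 0)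
    {x y : R} (hcomm : x * y = y * x) (hvx : v x = 0) (hvy : v y = 0) (i : ℕ) :
    v (x - y) ≤ v (x ^ i - y ^ i) := by
  have hc : Commute x y := hcomm
  rw [← hc.geom_sum₂_mul i, hvmul]
  calc v (x - y) = 0 + v (x - y) := (zero_add _).symm
  _ ≤ _ := add_le_add_left (vval_geom_nonneg v hv0 hvmul hvadd h1 hvx hvy i) _

lemma geom_sub_eq {x y : R} (hcomm : x * y = y * x) (n : ℕ) :
    (∑ i ∈ range n, x ^ i * y ^ (n - 1 - i)) - n • y ^ (n - 1)
      = ∑ i ∈ range n, (x ^ i - y ^ i) * y ^ (n - 1 - i) := by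
  have h2 : ∑ i ∈ range n, y ^ i * y ^ (n - 1 - i) = n • y ^ (n - 1) := by
    rw [Finset.sum_congr rfl (fun i hi => ?_), Finset.sum_const, Finset.card_range]
    rw [← pow_add]
    congr 1
    have := Finset.mem_range.mp hi
    omega
  rw [← h2, ← Finset.sum_sub_distrib]
  exact Finset.sum_congr rfl fun i _ => (sub_mul _ _ _).symm

lemma vval_geom_eq_zero (v : R → WithTop ℤ) (hv0 : ∀ x : R, v x = ⊤ ↔ x = 0)
    (hvmul : ∀ x y : R, v (x * y) = v x + v y)
    (hvadd : ∀ x y : R, min (v x) (v y) ≤ v (x + y)) (h1 : (1:R) ≠ 0)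
    {p : ℕ} (hp : p.Prime) (hvp : 0 < v ((p : R)))
    {x y : R} (hcomm : x * y = y * x) (hvx : v x = 0) (hvy : v y = 0)
    (hδ : 0 < v (x - y)) {n : ℕ} (hn : ¬ p ∣ n) :
    v (∑ i ∈ range n, x ^ i * y ^ (n - 1 - i)) = 0 := by
  set S := ∑ i ∈ range n, x ^ i * y ^ (n - 1 - i) with hSdef
  have hbase : v ((n : ℕ) • y ^ (n - 1)) = 0 := by
    rw [nsmul_eq_mul, hvmul, vval_nat_coprime v hv0 hvmul hvadd h1 hp hvp hn,
      vval_pow_zero v hv0 hvmul h1 hvy, add_zero]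
  have herr : 0 < v (S - n • y ^ (n - 1)) := by
    rw [geom_sub_eq hcomm n]
    refine lt_of_lt_of_le hδ (vval_sum_le v hv0 hvadd _ _ _ fun i _ => ?_)
    rw [hvmul, vval_pow_zero v hv0 hvmul h1 hvy, add_zero]
    exact vval_pow_sub_ge v hv0 hvmul hvadd h1 hcomm hvx hvy i
  have hrepr : S = n • y ^ (n - 1) + (S - n • y ^ (n - 1)) := by abel
  rw [hrepr, vval_add_eq v hv0 hvmul hvadd h1 (by rw [hbase]; exact herr), hbase]

end core
section kp
variable {R : Type*} [Ring R]

lemma vval_pow_p (v : R → WithTop ℤ) (hv0 : ∀ x : R, v x = ⊤ ↔ x = 0)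
    (hvmul : ∀ x y : R, v (x * y) = v x + v y)
    (hvadd : ∀ x y : R, min (v x) (v y) ≤ v (x + y)) (h1 : (1:R) ≠ 0)
    {p : ℕ} (hp : p.Prime) (hvp : 0 < v ((p : R))) (hpne : ((p : R)) ≠ 0)
    {x y : R} (hcomm : x * y = y * x) (hvx : v x = 0) (hvy : v y = 0)
    (hxy : v ((p : R)) < (p - 1) • v (x - y)) :
    v (x ^ p - y ^ p) = v (x - y) + v ((p : R)) := by
  obtain ⟨q, rfl⟩ : ∃ q, p = q + 1 := ⟨p - 1, by have := hp.pos; omega⟩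
  rw [Nat.add_sub_cancel] at hxy
  set d := x - y with hd
  have hc : Commute x y := hcomm
  have hdy : Commute d y := hc.sub_left (Commute.refl y)
  have hδpos : 0 < v d := by
    by_contra hcon
    push_neg at hcon
    exact absurd (lt_of_lt_of_le hxy (nsmul_nonpos hcon q)) (not_lt.mpr hvp.le)
  have hvpt : v (((q+1 : ℕ) : R)) ≠ ⊤ := fun h => hpne ((hv0 _).mp h)
  -- the binomial expansion
  set W : R := ∑ k ∈ range (q+1), d ^ k * y ^ (q - k) * ((q+1).choose (k+1) : R) with hW
  have hfac : x ^ (q+1) - y ^ (q+1) = d * W := by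
    have hbin := hdy.add_pow (q+1)
    rw [sub_add_cancel] at hbin
    rw [Finset.sum_range_succ'] at hbin
    simp only [pow_zero, Nat.choose_zero_right, Nat.cast_one, mul_one, one_mul,
      Nat.sub_zero] at hbin
    rw [hbin, add_sub_cancel_right, hW, Finset.mul_sum]
    refine Finset.sum_congr rfl fun k _ => ?_
    rw [← mul_assoc, ← mul_assoc, ← pow_succ']
    simp only [Nat.add_sub_add_right]
  rw [hfac, hvmul, hd]
  congr 1
  -- now show v W = v p
  have hbase : v (y ^ q * ((q+1 : ℕ) : R)) = v (((q+1:ℕ) : R)) := by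
    rw [hvmul, vval_pow_zero v hv0 hvmul h1 hvy, zero_add]
  set c : WithTop ℤ := min (v (((q+1:ℕ):R)) + v d) (q • v d) with hcdef
  have hclt : v (((q+1:ℕ):R)) < c := by
    refine lt_min ?_ hxy
    calc v (((q+1:ℕ):R)) = v (((q+1:ℕ):R)) + 0 := (add_zero _).symm
    _ < v (((q+1:ℕ):R)) + v d := WithTop.add_lt_add_left hvpt hδpos
  have hrest : c ≤ v (∑ k ∈ range q,
      d ^ (k+1) * y ^ (q - (k+1)) * ((q+1).choose (k+1+1) : R)) := by
    refine vval_sum_le v hv0 hvadd _ _ _ fun k hk => ?_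
    have hkq : k < q := Finset.mem_range.mp hk
    rw [hvmul, hvmul, vval_pow_zero v hv0 hvmul h1 hvy, add_zero,
      vval_pow v hv0 hvmul h1]
    rcases eq_or_lt_of_le (by omega : k + 2 ≤ q + 1) with heq | hlt
    · rw [heq, Nat.choose_self, Nat.cast_one, vval_one v hv0 hvmul h1, add_zero]
      have : k + 1 = q := by omega
      rw [this]
      exact min_le_right _ _
    · obtain ⟨m, hm⟩ := Nat.Prime.dvd_choose_self hp (by omega) hlt
      refine le_trans (min_le_left _ _) ?_
      have h1d : v d ≤ (k+1) • v d := by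
        calc v d = 1 • v d := (one_smul _ _).symm
        _ ≤ (k+1) • v d := nsmul_le_nsmul_left hδpos.le (by omega)
      have h2m : v (((q+1:ℕ):R)) ≤ v (((q+1:ℕ):R)) + v ((m:R)) := by
        calc v (((q+1:ℕ):R)) = v (((q+1:ℕ):R)) + 0 := (add_zero _).symm
        _ ≤ _ := add_le_add_right (vval_nat_nonneg v hv0 hvmul hvadd h1 m) _
      rw [hm, Nat.cast_mul, hvmul, add_comm (v (((q+1:ℕ):R))) (v d)]
      exact add_le_add h1d h2m
  have hWsplit : W = y ^ q * ((q+1 : ℕ) : R) + ∑ k ∈ range q,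
      d ^ (k+1) * y ^ (q - (k+1)) * ((q+1).choose (k+1+1) : R) := by
    rw [hW, Finset.sum_range_succ']
    rw [add_comm]
    congr 1
    simp [Nat.choose_one_right]
  rw [hWsplit, vval_add_eq v hv0 hvmul hvadd h1
    (by rw [hbase]; exact lt_of_lt_of_le hclt hrest), hbase]

end kp

/-- In a characteristic-zero ring with a discrete valuation with v(p) > 0:
for commuting x, y with v(x) = v(y) = 0 and (p−1)·v(x − y) > v(p), one has
v(xⁿ − yⁿ) = v(x − y) + v(n) for all n ≥ 1. -/
theorem valuation_powers_char_zero_ramified {R : Type*} [Ring R] [CharZero R]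
    (v : R → WithTop ℤ)
    (hv0 : ∀ x : R, v x = ⊤ ↔ x = 0)
    (hvmul : ∀ x y : R, v (x * y) = v x + v y)
    (hvadd : ∀ x y : R, min (v x) (v y) ≤ v (x + y))
    (p : ℕ) (hp : p.Prime) (hvp : 0 < v ((p : R)))
    (x y : R) (hcomm : x * y = y * x)
    (hvx : v x = 0) (hvy : v y = 0)
    (hxy : v ((p : R)) < (p - 1) • v (x - y)) :
    ∀ n : ℕ, 1 ≤ n → v (x ^ n - y ^ n) = v (x - y) + v ((n : R)) := by
  have h1 : (1:R) ≠ 0 := one_ne_zero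
  suffices H : ∀ n : ℕ, ∀ x y : R, x * y = y * x → v x = 0 → v y = 0 →
      v ((p : R)) < (p - 1) • v (x - y) → 1 ≤ n →
      v (x ^ n - y ^ n) = v (x - y) + v ((n : R)) by
    intro n hn
    exact H n x y hcomm hvx hvy hxy hn
  intro n
  induction n using Nat.strong_induction_on with
  | _ n ih =>
    intro x y hcomm hvx hvy hxy hn
    have hc : Commute x y := hcomm
    have hδpos : 0 < v (x - y) := by
      by_contra hcon
      push_neg at hcon
      exact absurd (lt_of_lt_of_le hxy (nsmul_nonpos hcon (p-1))) (not_lt.mpr hvp.le)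
    by_cases hpn : p ∣ n
    · obtain ⟨m, rfl⟩ := hpn
      have hm1 : 1 ≤ m := by
        rcases Nat.eq_zero_or_pos m with h | h
        · subst h; simp at hn
        · exact h
      have hmn : m < p * m := by
        have h2 := hp.two_le
        calc m = 1 * m := (one_mul m).symm
        _ < p * m := by exact Nat.mul_lt_mul_of_lt_of_le (by omega) (le_refl m) (by omega)
      have hpne : ((p:R)) ≠ 0 := Nat.cast_ne_zero.mpr hp.pos.ne'
      have hkp := vval_pow_p v hv0 hvmul hvadd h1 hp hvp hpne hcomm hvx hvy hxy
      have hcomm' : x^p * y^p = y^p * x^p := (hc.pow_pow p p)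
      have hvx' := vval_pow_zero v hv0 hvmul h1 hvx p
      have hvy' := vval_pow_zero v hv0 hvmul h1 hvy p
      have hxy' : v ((p : R)) < (p - 1) • v (x^p - y^p) := by
        rw [hkp, smul_add]
        calc v ((p:R)) < (p-1) • v (x - y) := hxy
        _ ≤ (p-1) • v (x - y) + (p-1) • v ((p:R)) :=
          le_add_of_nonneg_right (nsmul_nonneg hvp.le _)
      have hIH := ih m hmn (x^p) (y^p) hcomm' hvx' hvy' hxy' hm1
      rw [pow_mul, pow_mul, hIH, hkp, Nat.cast_mul, hvmul, add_assoc]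
    · have hS := vval_geom_eq_zero v hv0 hvmul hvadd h1 hp hvp hcomm hvx hvy hδpos hpn
      rw [← hc.geom_sum₂_mul n, hvmul, hS, zero_add,
        vval_nat_coprime v hv0 hvmul hvadd h1 hp hvp hpn, add_zero]
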